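/- Propositional logic has the projective Beth definability property: if an atom p is implicitly σ-definable under a formula φ (with p ∉ σ), then p is explicitly σ-definable under φ, i.e., there is a formula ψ with sig(ψ) ⊆ σ such that φ ⊨ p ↔ ψ. -/
import Mathlib


inductive PropForm : Type where
  | var : ℕ → PropForm
  | tru : PropForm
  | fls : PropForm
  | neg : PropForm → PropForm
  | conj : PropForm → PropForm → PropForm
  | disj : PropForm → PropForm → PropForm
deriving DecidableEq

namespace PropForm

def eval (v : ℕ → Bool) : PropForm → Bool
  | var p => v p
  | tru => true
  | fls => false
  | neg φ => !(eval v φ)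
  | conj φ ψ => eval v φ && eval v ψ
  | disj φ ψ => eval v φ || eval v ψ

def sig : PropForm → Finset ℕ
  | var p => {p}
  | tru => ∅
  | fls => ∅
  | neg φ => sig φ
  | conj φ ψ => sig φ ∪ sig ψ
  | disj φ ψ => sig φ ∪ sig ψ

def impl (φ ψ : PropForm) : PropForm := disj (neg φ) ψ

def iff (φ ψ : PropForm) : PropForm := conj (impl φ ψ) (impl ψ φ)

end PropForm

/-- Semantic entailment: every model of `φ` is a model of `ψ`. -/
def Entails (φ ψ : PropForm) : Prop :=
  ∀ v : ℕ → Bool, φ.eval v = true → ψ.eval v = true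

namespace BethAux
open PropForm

lemma eval_congr (φ : PropForm) (v w : ℕ → Bool) (h : ∀ q ∈ φ.sig, v q = w q) :
    φ.eval v = φ.eval w := by
  induction φ with
  | var q => exact h q (by simp [sig])
  | tru => rfl
  | fls => rfl
  | neg ψ ih => simp only [eval]; rw [ih (fun q hq => h q (by simpa [sig] using hq))]
  | conj a b iha ihb =>
      simp only [eval]
      rw [iha (fun q hq => h q (by simp [sig, hq])),
          ihb (fun q hq => h q (by simp [sig, hq]))]
  | disj a b iha ihb =>
      simp only [eval]
      rw [iha (fun q hq => h q (by simp [sig, hq])),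
          ihb (fun q hq => h q (by simp [sig, hq]))]

def bigConj : List PropForm → PropForm := List.foldr PropForm.conj PropForm.tru
def bigDisj : List PropForm → PropForm := List.foldr PropForm.disj PropForm.fls

lemma eval_bigConj (v : ℕ → Bool) (l : List PropForm) :
    (bigConj l).eval v = true ↔ ∀ χ ∈ l, χ.eval v = true := by
  induction l with
  | nil => simp [bigConj, eval]
  | cons a t ih => simp [bigConj, eval] at ih ⊢; aesop

lemma eval_bigDisj (v : ℕ → Bool) (l : List PropForm) :
    (bigDisj l).eval v = true ↔ ∃ χ ∈ l, χ.eval v = true := by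
  induction l with
  | nil => simp [bigDisj, eval]
  | cons a t ih => simp [bigDisj, eval] at ih ⊢; aesop

lemma sig_bigConj (l : List PropForm) (q : ℕ) (hq : q ∈ (bigConj l).sig) :
    ∃ χ ∈ l, q ∈ χ.sig := by
  induction l with
  | nil => simp [bigConj, sig] at hq
  | cons a t ih => simp [bigConj, sig] at hq ⊢; aesop

lemma sig_bigDisj (l : List PropForm) (q : ℕ) (hq : q ∈ (bigDisj l).sig) :
    ∃ χ ∈ l, q ∈ χ.sig := by
  induction l with
  | nil => simp [bigDisj, sig] at hq
  | cons a t ih => simp [bigDisj, sig] at hq ⊢; aesop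

def lit (q : ℕ) (b : Bool) : PropForm := if b then var q else neg (var q)

lemma eval_lit (v : ℕ → Bool) (q : ℕ) (b : Bool) :
    (lit q b).eval v = true ↔ v q = b := by
  cases b <;> simp [lit, eval]

lemma sig_lit (q : ℕ) (b : Bool) : (lit q b).sig = {q} := by
  cases b <;> simp [lit, sig]

noncomputable def conjOf (s : Finset ℕ) (f : ℕ → Bool) : PropForm :=
  bigConj (s.toList.map (fun q => lit q (f q)))

lemma eval_conjOf (v : ℕ → Bool) (s : Finset ℕ) (f : ℕ → Bool) :
    (conjOf s f).eval v = true ↔ ∀ q ∈ s, v q = f q := by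
  simp [conjOf, eval_bigConj, eval_lit]

lemma sig_conjOf (s : Finset ℕ) (f : ℕ → Bool) (q : ℕ)
    (hq : q ∈ (conjOf s f).sig) : q ∈ s := by
  obtain ⟨χ, hχ, hqχ⟩ := sig_bigConj _ q hq
  simp only [List.mem_map, Finset.mem_toList] at hχ
  obtain ⟨r, hr, rfl⟩ := hχ
  rw [sig_lit] at hqχ
  simp at hqχ; subst hqχ; exact hr

lemma eval_iff (v : ℕ → Bool) (a b : PropForm) :
    ((a.iff b).eval v = true) ↔ a.eval v = b.eval v := by
  cases h1 : a.eval v <;> cases h2 : b.eval v <;>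
    simp [PropForm.iff, PropForm.impl, eval, h1, h2]

end BethAux

open BethAux PropForm in
/-- Projective Beth definability property of propositional logic: implicit
`σ`-definability of the atom `p` under `φ` implies explicit `σ`-definability. -/
theorem projective_beth (φ : PropForm) (σ : Set ℕ) (p : ℕ) (hp : p ∉ σ)
    (himp : ∀ v₁ v₂ : ℕ → Bool, φ.eval v₁ = true → φ.eval v₂ = true →
      (∀ q ∈ σ, v₁ q = v₂ q) → v₁ p = v₂ p) :
    ∃ ψ : PropForm, ↑ψ.sig ⊆ σ ∧ Entails φ ((PropForm.var p).iff ψ) := by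
  classical
  by_cases hsat : ∃ v, φ.eval v = true
  case neg =>
    exact ⟨PropForm.fls, by simp [sig], fun v hv => absurd ⟨v, hv⟩ hsat⟩
  obtain ⟨v0, hv0⟩ := hsat
  by_cases hpφ : p ∈ φ.sig
  case neg =>
    exfalso
    set v1 : ℕ → Bool := fun q => if q = p then !(v0 p) else v0 q with hv1def
    have h1 : φ.eval v1 = true := by
      rw [← eval_congr φ v0 v1 ?_]
      · exact hv0
      · intro q hq
        have : q ≠ p := fun h => hpφ (h ▸ hq)
        simp [hv1def, this]
    have := himp v0 v1 hv0 h1 (fun q hq => by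
      have : q ≠ p := fun h => hp (h ▸ hq)
      simp [hv1def, this])
    simp [hv1def] at this
  -- main case
  set σ' : Finset ℕ := φ.sig.filter (fun q => q ∈ σ) with hσ'
  set extend : ({q // q ∈ σ'} → Bool) → (ℕ → Bool) :=
    fun g q => if h : q ∈ σ' then g ⟨q, h⟩ else false with hext
  set Good : ({q // q ∈ σ'} → Bool) → Prop :=
    fun g => ∃ w : ℕ → Bool, φ.eval w = true ∧ w p = true ∧
      ∀ q (h : q ∈ σ'), w q = g ⟨q, h⟩ with hGood
  set ψ : PropForm :=
    bigDisj (((Finset.univ : Finset ({q // q ∈ σ'} → Bool)).filter Good).toList.map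
      (fun g => conjOf σ' (extend g))) with hψ
  refine ⟨ψ, ?_, ?_⟩
  · intro q hq
    simp only [Finset.coe_subset, Finset.mem_coe] at hq
    obtain ⟨χ, hχ, hqχ⟩ := sig_bigDisj _ q hq
    simp only [List.mem_map] at hχ
    obtain ⟨g, hg, rfl⟩ := hχ
    have := sig_conjOf _ _ _ hqχ
    rw [hσ'] at this
    exact (Finset.mem_filter.mp this).2
  · intro v hv
    rw [eval_iff]
    show v p = ψ.eval v
    have key : ψ.eval v = true ↔ v p = true := by
      constructor
      · intro h
        rw [hψ, eval_bigDisj] at h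
        obtain ⟨χ, hχ, hev⟩ := h
        simp only [List.mem_map, Finset.mem_toList, Finset.mem_filter] at hχ
        obtain ⟨g, ⟨-, hgood⟩, rfl⟩ := hχ
        obtain ⟨w, hwφ, hwp, hwg⟩ := hgood
        rw [eval_conjOf] at hev
        -- v agrees with g on σ'
        set w' : ℕ → Bool := fun q => if q ∈ φ.sig then w q else v q with hw'
        have hw'φ : φ.eval w' = true := by
          rw [← eval_congr φ w w' (fun q hq => by simp [hw', hq])]
          exact hwφ
        have hagree : ∀ q ∈ σ, v q = w' q := by
          intro q hq
          by_cases hqs : q ∈ φ.sig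
          · have hqσ' : q ∈ σ' := by rw [hσ']; simp [hqs, hq]
            have h1 := hev q hqσ'
            have h2 := hwg q hqσ'
            simp only [hw', if_pos hqs]
            rw [h1, h2]
            simp [hext, hqσ']
          · simp [hw', hqs]
        have := himp v w' hv hw'φ hagree
        rw [this]
        simp only [hw', if_pos hpφ]
        exact hwp
      · intro h
        rw [hψ, eval_bigDisj]
        set g : {q // q ∈ σ'} → Bool := fun q => v q.1 with hg
        refine ⟨conjOf σ' (extend g), ?_, ?_⟩
        · simp only [List.mem_map, Finset.mem_toList, Finset.mem_filter]
          exact ⟨g, ⟨Finset.mem_univ _, ⟨v, hv, h, fun q hq => rfl⟩⟩, rfl⟩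
        · rw [eval_conjOf]
          intro q hq
          simp [hext, hg, hq]
    cases hvp : v p with
    | true => rw [hvp] at key; symm; exact key.mpr rfl
    | false =>
      cases hψv : ψ.eval v with
      | true => rw [key.mp hψv] at hvp; exact hvp.symm ▸ rfl
      | false => rfl
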